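/- arXiv:1308.3530 — 2 statements merged into one kernel-verified Lean document; each statement's English description precedes it below -/
import Mathlib

section
/- ε(K_{m+n} − K_{m,n}) − ε(K_{m+n}) = (1/4)mn(mn − 7m − 7n + 13) for m, n ≥ 1. -/
open Finset SimpleGraph

/-- A 4-cycle exists within the vertex set `s` of the graph `G`. -/
def fourCycleOn {V : Type*} (G : SimpleGraph V) (s : Set V) : Prop :=
  ∃ a b c d, a ∈ s ∧ b ∈ s ∧ c ∈ s ∧ d ∈ s ∧
    a ≠ b ∧ a ≠ c ∧ a ≠ d ∧ b ≠ c ∧ b ≠ d ∧ c ≠ d ∧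
    G.Adj a b ∧ G.Adj b c ∧ G.Adj c d ∧ G.Adj d a

/-- The pair of edges `{e,f}` spans an edge of the edge polytope: they share a
vertex, or they are disjoint and the induced subgraph on their endpoints has no 4-cycle. -/
def epPair {V : Type*} (G : SimpleGraph V) (e f : Sym2 V) : Prop :=
  (∃ v, v ∈ e ∧ v ∈ f) ∨
  ((¬ ∃ v, v ∈ e ∧ v ∈ f) ∧ ¬ fourCycleOn G {v | v ∈ e ∨ v ∈ f})

open scoped Classical in
/-- The number of edges (1-dimensional faces) of the edge polytope of `G`:
the number of unordered pairs of distinct edges satisfying `epPair`. -/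
noncomputable def epsilon {V : Type*} [Fintype V] (G : SimpleGraph V) : ℕ :=
  ((G.edgeFinset.powersetCard 2).filter
    (fun s => ∀ e ∈ s, ∀ f ∈ s, e ≠ f → epPair G e f)).card

open scoped Classical in
/-- number of 4-subsets inducing a path of length 3. -/
noncomputable def aCount {V : Type*} [Fintype V] (H : SimpleGraph V) : ℕ :=
  ((univ.powersetCard 4).filter (fun s => ∃ a b c d : V,
    s = {a, b, c, d} ∧ a ≠ b ∧ a ≠ c ∧ a ≠ d ∧ b ≠ c ∧ b ≠ d ∧ c ≠ d ∧
    H.Adj a b ∧ H.Adj b c ∧ H.Adj c d ∧ ¬H.Adj a c ∧ ¬H.Adj a d ∧ ¬H.Adj b d)).card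

open scoped Classical in
/-- number of 4-subsets inducing a cycle of length 4. -/
noncomputable def bCount {V : Type*} [Fintype V] (H : SimpleGraph V) : ℕ :=
  ((univ.powersetCard 4).filter (fun s => ∃ a b c d : V,
    s = {a, b, c, d} ∧ a ≠ b ∧ a ≠ c ∧ a ≠ d ∧ b ≠ c ∧ b ≠ d ∧ c ≠ d ∧
    H.Adj a b ∧ H.Adj b c ∧ H.Adj c d ∧ H.Adj d a ∧ ¬H.Adj a c ∧ ¬H.Adj b d)).card

open scoped Classical in
/-- number of 4-subsets inducing a path of length 2 plus an isolated vertex. -/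
noncomputable def cCount {V : Type*} [Fintype V] (H : SimpleGraph V) : ℕ :=
  ((univ.powersetCard 4).filter (fun s => ∃ a b c d : V,
    s = {a, b, c, d} ∧ a ≠ b ∧ a ≠ c ∧ a ≠ d ∧ b ≠ c ∧ b ≠ d ∧ c ≠ d ∧
    H.Adj a b ∧ H.Adj b c ∧ ¬H.Adj a c ∧ ¬H.Adj a d ∧ ¬H.Adj b d ∧ ¬H.Adj c d)).card

open scoped Classical in
/-- the number of triangles of `H`. -/
noncomputable def k3 {V : Type*} [Fintype V] (H : SimpleGraph V) : ℕ :=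
  ((univ.powersetCard 3).filter (fun s => ∀ i ∈ s, ∀ j ∈ s, i ≠ j → H.Adj i j)).card

open scoped Classical in
/-- the number of 3-subsets inducing a path with exactly two edges. -/
noncomputable def psi {V : Type*} [Fintype V] (H : SimpleGraph V) : ℕ :=
  ((univ.powersetCard 3).filter (fun s => ∃ a b c : V,
    s = {a, b, c} ∧ a ≠ b ∧ a ≠ c ∧ b ≠ c ∧ H.Adj a b ∧ H.Adj b c ∧ ¬H.Adj a c)).card

/-- the complete bipartite graph `K_{m,n}` on the vertex set `[d]`, with parts
`{0,…,m-1}` and `{m,…,m+n-1}`. -/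
def bip (d m n : ℕ) : SimpleGraph (Fin d) where
  Adj i j := ((i : ℕ) < m ∧ m ≤ (j : ℕ) ∧ (j : ℕ) < m + n) ∨
    ((j : ℕ) < m ∧ m ≤ (i : ℕ) ∧ (i : ℕ) < m + n)
  symm := by constructor; intro i j h; tauto
  loopless := by constructor; intro i h; omega

/-- the copy of `H` on the first `r` vertices of `[d]`. -/
def embedGraph {r : ℕ} (H : SimpleGraph (Fin r)) (d : ℕ) : SimpleGraph (Fin d) where
  Adj i j := ∃ (hi : (i : ℕ) < r) (hj : (j : ℕ) < r), H.Adj ⟨i, hi⟩ ⟨j, hj⟩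
  symm := by constructor; rintro i j ⟨hi, hj, h⟩; exact ⟨hj, hi, h.symm⟩
  loopless := by constructor; rintro i ⟨hi, hj, h⟩; exact H.loopless.irrefl _ h

/-- the subgraph of `H` consisting of the edges in the connected component `c`. -/
def compGraph {V : Type*} (H : SimpleGraph V) (c : H.ConnectedComponent) :
    SimpleGraph V where
  Adj i j := H.Adj i j ∧ H.connectedComponentMk i = c
  symm := by
    constructor
    rintro i j ⟨h, hc⟩
    exact ⟨h.symm, (SimpleGraph.ConnectedComponent.sound h.symm.reachable).trans hc⟩
  loopless := by constructor; rintro i ⟨h, _⟩; exact H.loopless.irrefl i h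

open scoped Classical in
/-- `|X_{i,j}|`: the number of vertices (other than `i, j`) adjacent to `i` but not `j`. -/
noncomputable def cardX {V : Type*} [Fintype V] (H : SimpleGraph V) (i j : V) : ℕ :=
  (univ.filter (fun ℓ => ℓ ≠ i ∧ ℓ ≠ j ∧ H.Adj i ℓ ∧ ¬ H.Adj j ℓ)).card


section AuxEP
open scoped Classical
variable {W : Type*} [Fintype W] [DecidableEq W]

lemma pair_eq_cases {α : Type*} [DecidableEq α] {a b c d : α}
    (h : ({a, b} : Finset α) = {c, d}) : (a = c ∧ b = d) ∨ (a = d ∧ b = c) := by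
  have ha : a ∈ ({c, d} : Finset α) := by rw [← h]; simp
  have hb : b ∈ ({c, d} : Finset α) := by rw [← h]; simp
  have hc : c ∈ ({a, b} : Finset α) := by rw [h]; simp
  have hd : d ∈ ({a, b} : Finset α) := by rw [h]; simp
  simp only [Finset.mem_insert, Finset.mem_singleton] at ha hb hc hd
  rcases ha with rfl | rfl <;> rcases hb with rfl | rfl <;> tauto

omit [Fintype W] [DecidableEq W] in
lemma epPair_comm {G : SimpleGraph W} {e f : Sym2 W} (h : epPair G e f) : epPair G f e := by
  rcases h with ⟨v, h1, h2⟩ | ⟨h1, h2⟩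
  · exact Or.inl ⟨v, h2, h1⟩
  · refine Or.inr ⟨fun ⟨v, h3, h4⟩ => h1 ⟨v, h4, h3⟩, ?_⟩
    have : {v | v ∈ f ∨ v ∈ e} = {v | v ∈ e ∨ v ∈ f} := by ext v; exact or_comm
    rw [this]; exact h2

lemma two_mul_epsilon (G : SimpleGraph W) [Fintype G.edgeSet]
    [DecidablePred (fun p : Sym2 W × Sym2 W => epPair G p.1 p.2)] :
    2 * epsilon G = (G.edgeFinset.offDiag.filter fun p => epPair G p.1 p.2).card := by
  rw [epsilon]
  set T := ((G.edgeFinset.powersetCard 2).filter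
    (fun s => ∀ e ∈ s, ∀ f ∈ s, e ≠ f → epPair G e f)) with hT
  have hmap : ∀ p ∈ (G.edgeFinset.offDiag.filter fun p => epPair G p.1 p.2),
      ({p.1, p.2} : Finset (Sym2 W)) ∈ T := by
    rintro ⟨e, f⟩ hp
    simp only [mem_filter, mem_offDiag] at hp
    obtain ⟨⟨he, hf, hef⟩, hpair⟩ := hp
    simp only [hT, mem_filter, mem_powersetCard, Finset.subset_iff, mem_edgeFinset]
    refine ⟨⟨?_, ?_⟩, ?_⟩
    · intro x hx
      simp only [mem_insert, mem_singleton] at hx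
      rcases hx with rfl | rfl
      · exact mem_edgeFinset.mp he
      · exact mem_edgeFinset.mp hf
    · rw [card_insert_of_notMem (by simpa using hef), card_singleton]
    · intro x hx y hy hxy
      simp only [mem_insert, mem_singleton] at hx hy
      rcases hx with rfl | rfl <;> rcases hy with rfl | rfl
      · exact absurd rfl hxy
      · exact hpair
      · exact epPair_comm hpair
      · exact absurd rfl hxy
  rw [Finset.card_eq_sum_card_fiberwise hmap]
  have hfib : ∀ s ∈ T, ((G.edgeFinset.offDiag.filter fun p => epPair G p.1 p.2).filter
      (fun p => ({p.1, p.2} : Finset (Sym2 W)) = s)).card = 2 := by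
    intro s hs
    simp only [hT, mem_filter, mem_powersetCard] at hs
    obtain ⟨⟨hsub, hcard⟩, hprop⟩ := hs
    obtain ⟨e, f, hef, rfl⟩ := Finset.card_eq_two.mp hcard
    have he : e ∈ G.edgeFinset := hsub (by simp)
    have hf : f ∈ G.edgeFinset := hsub (by simp)
    have hp : epPair G e f := hprop e (by simp) f (by simp) hef
    have : (G.edgeFinset.offDiag.filter fun p => epPair G p.1 p.2).filter
        (fun p => ({p.1, p.2} : Finset (Sym2 W)) = {e, f}) = {(e, f), (f, e)} := by
      ext ⟨x, y⟩
      simp only [mem_filter, mem_offDiag, mem_insert, mem_singleton, Prod.mk.injEq]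
      constructor
      · rintro ⟨⟨⟨hx, hy, hxy⟩, -⟩, hset⟩
        have := pair_eq_cases hset
        tauto
      · rintro (⟨rfl, rfl⟩ | ⟨rfl, rfl⟩)
        · exact ⟨⟨⟨he, hf, hef⟩, hp⟩, rfl⟩
        · exact ⟨⟨⟨hf, he, hef.symm⟩, epPair_comm hp⟩, by rw [Finset.pair_comm]⟩
    rw [this]
    rw [card_insert_of_notMem (by simp [Prod.ext_iff]; exact fun h _ => hef h), card_singleton]
  rw [Finset.sum_congr rfl hfib, Finset.sum_const, smul_eq_mul, mul_comm]
  refine congrArg (· * 2) ?_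
  apply congrArg Finset.card
  apply Finset.ext
  intro s
  simp only [hT, mem_filter, mem_powersetCard, Finset.subset_iff, mem_edgeFinset]

lemma card_shared (G : SimpleGraph W) [Fintype G.edgeSet] [DecidableRel G.Adj]
    [DecidablePred (fun p : Sym2 W × Sym2 W => ∃ v, v ∈ p.1 ∧ v ∈ p.2)] :
    (G.edgeFinset.offDiag.filter fun p => ∃ v, v ∈ p.1 ∧ v ∈ p.2).card
      = ∑ v, (G.degree v * G.degree v - G.degree v) := by
  classical
  have key : ((univ : Finset W).biUnion
      (fun v => {v} ×ˢ (G.neighborFinset v).offDiag)).card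
      = (G.edgeFinset.offDiag.filter fun p => ∃ v, v ∈ p.1 ∧ v ∈ p.2).card := by
    apply Finset.card_bij (fun t _ => (s(t.1, t.2.1), s(t.1, t.2.2)))
    · rintro ⟨v, a, b⟩ ht
      simp only [mem_biUnion, mem_product, mem_singleton, mem_offDiag,
        mem_neighborFinset] at ht
      obtain ⟨w, -, rfl, ha, hb, hab⟩ := ht
      simp only [mem_filter, mem_offDiag, mem_edgeFinset, mem_edgeSet]
      refine ⟨⟨ha, hb, ?_⟩, ⟨v, by simp, by simp⟩⟩
      intro hEq
      rw [Sym2.eq_iff] at hEq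
      rcases hEq with ⟨-, rfl⟩ | ⟨rfl, rfl⟩
      · exact hab rfl
      · exact G.loopless.irrefl _ ha
    · rintro ⟨v, a, b⟩ ht ⟨v', a', b'⟩ ht' hEq
      simp only [mem_biUnion, mem_product, mem_singleton, mem_offDiag,
        mem_neighborFinset] at ht ht'
      obtain ⟨w, -, rfl, ha, hb, hab⟩ := ht
      obtain ⟨w', -, rfl, ha', hb', hab'⟩ := ht'
      simp only [Prod.mk.injEq, Sym2.eq_iff] at hEq
      obtain ⟨h1, h2⟩ := hEq
      have hva : v ≠ a := fun h => G.loopless.irrefl _ (h ▸ ha)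
      have hvb : v ≠ b := fun h => G.loopless.irrefl _ (h ▸ hb)
      have hva' : v' ≠ a' := fun h => G.loopless.irrefl _ (h ▸ ha')
      have hvb' : v' ≠ b' := fun h => G.loopless.irrefl _ (h ▸ hb')
      rcases h1 with ⟨hvv', haa'⟩ | ⟨hvb', hav'⟩
      · rcases h2 with ⟨-, hbb'⟩ | ⟨-, hbv'⟩
        · subst hvv'; subst haa'; subst hbb'; rfl
        · exact absurd (hbv'.trans hvv'.symm).symm hvb
      · rcases h2 with ⟨hvv', -⟩ | ⟨-, hbv'⟩
        · exact absurd (hvv'.trans hav'.symm) hva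
        · exact absurd (hav'.trans hbv'.symm) hab
    · rintro ⟨e, f⟩ hp
      simp only [mem_filter, mem_offDiag, mem_edgeFinset, mem_edgeSet] at hp
      obtain ⟨⟨he, hf, hef⟩, v, hv1, hv2⟩ := hp
      obtain ⟨a, rfl⟩ := Sym2.mem_iff_exists.mp hv1
      obtain ⟨b, rfl⟩ := Sym2.mem_iff_exists.mp hv2
      rw [SimpleGraph.mem_edgeSet] at he hf
      refine ⟨(v, a, b), ?_, rfl⟩
      simp only [mem_biUnion, mem_product, mem_singleton, mem_offDiag,
        mem_neighborFinset]
      exact ⟨v, mem_univ v, rfl, he, hf, fun h => hef (by rw [h])⟩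
  rw [← key, Finset.card_biUnion]
  · apply Finset.sum_congr rfl
    intro v _
    rw [Finset.card_product, Finset.card_singleton, one_mul, Finset.offDiag_card,
      SimpleGraph.card_neighborFinset_eq_degree]
  · intro x _ y _ hxy
    simp only [Finset.disjoint_left]
    rintro ⟨v, a, b⟩ h1 h2
    simp only [mem_product, mem_singleton] at h1 h2
    exact hxy (h1.1 ▸ h2.1 ▸ rfl)

end AuxEP
section AuxTop
open scoped Classical

lemma sym2_rep {α : Type*} (e : Sym2 α) : ∃ a b, e = s(a, b) := by
  induction e using Sym2.inductionOn with | hf a b => exact ⟨a, b, rfl⟩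

lemma sq_sub (k : ℕ) : k * k - k = k * (k - 1) := by
  cases k with
  | zero => rfl
  | succ k => rw [Nat.mul_succ, Nat.add_sub_cancel, Nat.succ_sub_one]

lemma epPair_top_char {d : ℕ} {e f : Sym2 (Fin d)}
    (he : e ∈ (⊤ : SimpleGraph (Fin d)).edgeSet) (hf : f ∈ (⊤ : SimpleGraph (Fin d)).edgeSet)
    (hef : e ≠ f) : epPair (⊤ : SimpleGraph (Fin d)) e f ↔ ∃ v, v ∈ e ∧ v ∈ f := by
  constructor
  · rintro (h | ⟨hns, hnc⟩)
    · exact h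
    · exfalso
      apply hnc
      obtain ⟨a, b, rfl⟩ := sym2_rep e
      obtain ⟨c, x, rfl⟩ := sym2_rep f
      rw [SimpleGraph.mem_edgeSet, top_adj] at he hf
      have hac : a ≠ c := fun h => hns ⟨a, by simp, by simp [h]⟩
      have had : a ≠ x := fun h => hns ⟨a, by simp, by simp [h]⟩
      have hbc : b ≠ c := fun h => hns ⟨b, by simp, by simp [h]⟩
      have hbd : b ≠ x := fun h => hns ⟨b, by simp, by simp [h]⟩
      exact ⟨a, c, b, x, Or.inl (by simp), Or.inr (by simp), Or.inl (by simp),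
        Or.inr (by simp), hac, he, had, hbc.symm, hf, hbd,
        (top_adj _ _).mpr hac, (top_adj _ _).mpr hbc.symm, (top_adj _ _).mpr hbd,
        (top_adj _ _).mpr had.symm⟩
  · exact Or.inl

lemma two_mul_epsilon_top (d : ℕ) :
    2 * epsilon (⊤ : SimpleGraph (Fin d)) = d * ((d - 1) * (d - 2)) := by
  rw [two_mul_epsilon]
  have hchar : ((⊤ : SimpleGraph (Fin d)).edgeFinset.offDiag.filter
        fun p => epPair (⊤ : SimpleGraph (Fin d)) p.1 p.2)
      = ((⊤ : SimpleGraph (Fin d)).edgeFinset.offDiag.filter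
        fun p => ∃ v, v ∈ p.1 ∧ v ∈ p.2) := by
    apply Finset.filter_congr
    rintro ⟨e, f⟩ hp
    simp only [mem_offDiag, mem_edgeFinset] at hp
    exact epPair_top_char hp.1 hp.2.1 hp.2.2
  rw [hchar, card_shared]
  have hdeg : ∀ v : Fin d, (⊤ : SimpleGraph (Fin d)).degree v = d - 1 := by
    intro v
    have h1 : (⊤ : SimpleGraph (Fin d)).neighborFinset v = univ \ {v} := by
      ext w
      simp [SimpleGraph.mem_neighborFinset, ne_comm]
    rw [SimpleGraph.degree, h1, Finset.card_sdiff_of_subset (by simp), Finset.card_univ,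
      Fintype.card_fin, Finset.card_singleton]
  rw [Finset.sum_congr rfl (fun v _ => by rw [hdeg v, sq_sub])]
  rw [Finset.sum_const, Finset.card_univ, Fintype.card_fin, smul_eq_mul]
  have h2 : d - 1 - 1 = d - 2 := by omega
  rw [h2]

end AuxTop
section AuxG1
open scoped Classical

lemma bip_adj {d m n : ℕ} (i j : Fin d) : (bip d m n).Adj i j ↔
    (((i : ℕ) < m ∧ m ≤ (j : ℕ) ∧ (j : ℕ) < m + n) ∨
      ((j : ℕ) < m ∧ m ≤ (i : ℕ) ∧ (i : ℕ) < m + n)) := Iff.rfl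

lemma G1_adj {m n : ℕ} (i j : Fin (m + n)) :
    ((⊤ : SimpleGraph (Fin (m + n))) \ bip (m + n) m n).Adj i j ↔
      i ≠ j ∧ (((i : ℕ) < m ∧ (j : ℕ) < m) ∨ (m ≤ (i : ℕ) ∧ m ≤ (j : ℕ))) := by
  rw [SimpleGraph.sdiff_adj, SimpleGraph.top_adj, bip_adj]
  have hi := i.isLt
  have hj := j.isLt
  constructor
  · rintro ⟨h1, h2⟩
    exact ⟨h1, by omega⟩
  · rintro ⟨h1, h2⟩
    exact ⟨h1, by omega⟩

lemma card_filter_lt (m n : ℕ) :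
    ((univ : Finset (Fin (m + n))).filter fun w : Fin (m + n) => (w : ℕ) < m).card = m := by
  have key : ((univ : Finset (Fin (m + n))).filter fun w : Fin (m + n) => (w : ℕ) < m).card
      = (univ : Finset (Fin m)).card := by
    apply Finset.card_bij' (i := fun (w : Fin (m + n)) hw => (⟨(w : ℕ),
        (mem_filter.mp hw).2⟩ : Fin m)) (j := fun (w : Fin m) _ => Fin.castAdd n w)
    · intro a ha; exact mem_univ _
    · intro a ha; simp [Fin.ext_iff]
    · intro a ha; simp [Fin.ext_iff]
    · intro a ha
      simp only [mem_filter, mem_univ, true_and, Fin.coe_castAdd]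
      exact a.isLt
  rw [key, Finset.card_univ, Fintype.card_fin]

lemma card_filter_ge (m n : ℕ) :
    ((univ : Finset (Fin (m + n))).filter fun w : Fin (m + n) => m ≤ (w : ℕ)).card = n := by
  have h1 : ((univ : Finset (Fin (m + n))).filter fun w : Fin (m + n) => m ≤ (w : ℕ))
      = univ \ ((univ : Finset (Fin (m + n))).filter fun w : Fin (m + n) => (w : ℕ) < m) := by
    ext w
    simp only [mem_filter, mem_univ, true_and, mem_sdiff, not_lt]
  rw [h1, Finset.card_sdiff_of_subset (Finset.filter_subset _ _), Finset.card_univ,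
    Fintype.card_fin, card_filter_lt]
  omega

lemma G1_degree {m n : ℕ} (v : Fin (m + n)) :
    ((⊤ : SimpleGraph (Fin (m + n))) \ bip (m + n) m n).degree v
      = (if (v : ℕ) < m then m else n) - 1 := by
  have h1 : ((⊤ : SimpleGraph (Fin (m + n))) \ bip (m + n) m n).neighborFinset v
      = ((univ : Finset (Fin (m + n))).filter fun w : Fin (m + n) =>
          (((v : ℕ) < m ∧ (w : ℕ) < m) ∨ (m ≤ (v : ℕ) ∧ m ≤ (w : ℕ)))) \ {v} := by
    ext w
    simp only [SimpleGraph.mem_neighborFinset, G1_adj, mem_sdiff, mem_filter,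
      mem_univ, true_and, mem_singleton]
    constructor
    · rintro ⟨h2, h3⟩
      exact ⟨h3, h2.symm⟩
    · rintro ⟨h2, h3⟩
      exact ⟨fun hh => h3 hh.symm, h2⟩
  rw [SimpleGraph.degree, h1, Finset.card_sdiff_of_subset (by
    simp only [Finset.singleton_subset_iff, mem_filter, mem_univ, true_and]
    omega), Finset.card_singleton]
  by_cases hv : (v : ℕ) < m
  · rw [if_pos hv]
    have h2 : ((univ : Finset (Fin (m + n))).filter fun w : Fin (m + n) =>
        (((v : ℕ) < m ∧ (w : ℕ) < m) ∨ (m ≤ (v : ℕ) ∧ m ≤ (w : ℕ))))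
        = (univ : Finset (Fin (m + n))).filter fun w : Fin (m + n) => (w : ℕ) < m := by
      apply Finset.filter_congr
      intro w _
      constructor
      · intro h; omega
      · intro h; omega
    rw [h2, card_filter_lt]
  · rw [if_neg hv]
    have h2 : ((univ : Finset (Fin (m + n))).filter fun w : Fin (m + n) =>
        (((v : ℕ) < m ∧ (w : ℕ) < m) ∨ (m ≤ (v : ℕ) ∧ m ≤ (w : ℕ))))
        = (univ : Finset (Fin (m + n))).filter fun w : Fin (m + n) => m ≤ (w : ℕ) := by
      apply Finset.filter_congr
      intro w _
      constructor
      · intro h; omega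
      · intro h; omega
    rw [h2, card_filter_ge]

end AuxG1
section AuxG1b
open scoped Classical

lemma epPair_G1_char {m n : ℕ} {e f : Sym2 (Fin (m + n))}
    (he : e ∈ ((⊤ : SimpleGraph (Fin (m + n))) \ bip (m + n) m n).edgeSet)
    (hf : f ∈ ((⊤ : SimpleGraph (Fin (m + n))) \ bip (m + n) m n).edgeSet)
    (hef : e ≠ f) :
    epPair ((⊤ : SimpleGraph (Fin (m + n))) \ bip (m + n) m n) e f ↔
      (∃ v, v ∈ e ∧ v ∈ f) ∨
      (((∀ v ∈ e, (v : ℕ) < m) ∧ (∀ v ∈ f, m ≤ (v : ℕ))) ∨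
       ((∀ v ∈ e, m ≤ (v : ℕ)) ∧ (∀ v ∈ f, (v : ℕ) < m))) := by
  obtain ⟨a, b, rfl⟩ := sym2_rep e
  obtain ⟨c, x, rfl⟩ := sym2_rep f
  rw [SimpleGraph.mem_edgeSet, G1_adj] at he hf
  obtain ⟨hab, hpab⟩ := he
  obtain ⟨hcx, hpcx⟩ := hf
  constructor
  · rintro (h | ⟨hns, hnc⟩)
    · exact Or.inl h
    · have hac : a ≠ c := fun h => hns ⟨a, by simp, by simp [h]⟩
      have hax : a ≠ x := fun h => hns ⟨a, by simp, by simp [h]⟩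
      have hbc : b ≠ c := fun h => hns ⟨b, by simp, by simp [h]⟩
      have hbx : b ≠ x := fun h => hns ⟨b, by simp, by simp [h]⟩
      rcases hpab with ⟨ha, hb⟩ | ⟨ha, hb⟩ <;> rcases hpcx with ⟨hc, hx⟩ | ⟨hc, hx⟩
      · exfalso
        apply hnc
        refine ⟨a, c, b, x, Or.inl (by simp), Or.inr (by simp), Or.inl (by simp),
          Or.inr (by simp), hac, hab, hax, hbc.symm, hcx, hbx, ?_, ?_, ?_, ?_⟩
        · exact (G1_adj a c).mpr ⟨hac, Or.inl ⟨ha, hc⟩⟩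
        · exact (G1_adj c b).mpr ⟨hbc.symm, Or.inl ⟨hc, hb⟩⟩
        · exact (G1_adj b x).mpr ⟨hbx, Or.inl ⟨hb, hx⟩⟩
        · exact (G1_adj x a).mpr ⟨hax.symm, Or.inl ⟨hx, ha⟩⟩
      · refine Or.inr (Or.inl ⟨?_, ?_⟩)
        · intro v hv
          rw [Sym2.mem_iff] at hv
          rcases hv with rfl | rfl <;> assumption
        · intro v hv
          rw [Sym2.mem_iff] at hv
          rcases hv with rfl | rfl <;> assumption
      · refine Or.inr (Or.inr ⟨?_, ?_⟩)
        · intro v hv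
          rw [Sym2.mem_iff] at hv
          rcases hv with rfl | rfl <;> assumption
        · intro v hv
          rw [Sym2.mem_iff] at hv
          rcases hv with rfl | rfl <;> assumption
      · exfalso
        apply hnc
        refine ⟨a, c, b, x, Or.inl (by simp), Or.inr (by simp), Or.inl (by simp),
          Or.inr (by simp), hac, hab, hax, hbc.symm, hcx, hbx, ?_, ?_, ?_, ?_⟩
        · exact (G1_adj a c).mpr ⟨hac, Or.inr ⟨ha, hc⟩⟩
        · exact (G1_adj c b).mpr ⟨hbc.symm, Or.inr ⟨hc, hb⟩⟩
        · exact (G1_adj b x).mpr ⟨hbx, Or.inr ⟨hb, hx⟩⟩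
        · exact (G1_adj x a).mpr ⟨hax.symm, Or.inr ⟨hx, ha⟩⟩
  · rintro (h | h)
    · exact Or.inl h
    · have ha : a ∈ s(a, b) := by simp
      have hb : b ∈ s(a, b) := by simp
      have hc : c ∈ s(c, x) := by simp
      have hx : x ∈ s(c, x) := by simp
      have hns : ¬∃ v, v ∈ s(a, b) ∧ v ∈ s(c, x) := by
        rintro ⟨v, hv1, hv2⟩
        rcases h with ⟨h1, h2⟩ | ⟨h1, h2⟩
        · exact absurd (h2 v hv2) (not_le.mpr (h1 v hv1))
        · exact absurd (h1 v hv1) (not_le.mpr (h2 v hv2))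
      refine Or.inr ⟨hns, ?_⟩
      rintro ⟨p, q, r, t, hp, hq, hr, ht, hpq, hpr, hpt, hqr, hqt, hrt,
        apq, aqr, art, atp⟩
      simp only [Set.mem_setOf_eq, Sym2.mem_iff] at hp hq hr ht
      rw [G1_adj] at apq aqr art atp
      have l1 : (p : ℕ) = a ∨ (p : ℕ) = b ∨ (p : ℕ) = c ∨ (p : ℕ) = x := by
        rcases hp with (h' | h') | (h' | h') <;> simp [h']
      have l2 : (q : ℕ) = a ∨ (q : ℕ) = b ∨ (q : ℕ) = c ∨ (q : ℕ) = x := by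
        rcases hq with (h' | h') | (h' | h') <;> simp [h']
      have l3 : (r : ℕ) = a ∨ (r : ℕ) = b ∨ (r : ℕ) = c ∨ (r : ℕ) = x := by
        rcases hr with (h' | h') | (h' | h') <;> simp [h']
      have l4 : (t : ℕ) = a ∨ (t : ℕ) = b ∨ (t : ℕ) = c ∨ (t : ℕ) = x := by
        rcases ht with (h' | h') | (h' | h') <;> simp [h']
      have d1 : (p : ℕ) ≠ (q : ℕ) := fun hh => hpq (Fin.ext hh)
      have d2 : (p : ℕ) ≠ (r : ℕ) := fun hh => hpr (Fin.ext hh)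
      have d3 : (p : ℕ) ≠ (t : ℕ) := fun hh => hpt (Fin.ext hh)
      have d4 : (q : ℕ) ≠ (r : ℕ) := fun hh => hqr (Fin.ext hh)
      have d5 : (q : ℕ) ≠ (t : ℕ) := fun hh => hqt (Fin.ext hh)
      have d6 : (r : ℕ) ≠ (t : ℕ) := fun hh => hrt (Fin.ext hh)
      have m1 := apq.2
      have m2 := aqr.2
      have m3 := art.2
      have m4 := atp.2
      rcases h with ⟨h1, h2⟩ | ⟨h1, h2⟩
      · have pa := h1 a ha
        have pb := h1 b hb
        have pc := h2 c hc
        have px := h2 x hx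
        omega
      · have pa := h1 a ha
        have pb := h1 b hb
        have pc := h2 c hc
        have px := h2 x hx
        omega

end AuxG1b
section AuxG1c
open scoped Classical

lemma card_E1 (m n : ℕ) :
    ((((⊤ : SimpleGraph (Fin (m + n))) \ bip (m + n) m n).edgeFinset.filter
      (fun e : Sym2 (Fin (m + n)) => ∀ v : Fin (m + n), v ∈ e → (v : ℕ) < m)).card) = m.choose 2 := by
  have key : ((⊤ : SimpleGraph (Fin m)).edgeFinset).card
      = ((((⊤ : SimpleGraph (Fin (m + n))) \ bip (m + n) m n).edgeFinset.filter
        (fun e : Sym2 (Fin (m + n)) => ∀ v : Fin (m + n), v ∈ e → (v : ℕ) < m)).card) := by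
    apply Finset.card_bij (fun e _ => Sym2.map (Fin.castAdd n) e)
    · intro e he
      obtain ⟨u, v, rfl⟩ := sym2_rep e
      rw [mem_edgeFinset, SimpleGraph.mem_edgeSet, top_adj] at he
      simp only [Sym2.map_pair_eq, mem_filter, mem_edgeFinset, SimpleGraph.mem_edgeSet,
        G1_adj, Sym2.mem_iff, Fin.coe_castAdd]
      refine ⟨⟨?_, Or.inl ⟨u.isLt, v.isLt⟩⟩, ?_⟩
      · intro hh
        exact he (Fin.ext (by simpa [Fin.ext_iff] using hh))
      · rintro w (rfl | rfl)
        · exact u.isLt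
        · exact v.isLt
    · intro e he e' he' hEq
      have hinj : Function.Injective (Fin.castAdd n : Fin m → Fin (m + n)) := by
        intro u v h
        rw [Fin.ext_iff] at h ⊢
        simpa using h
      exact Sym2.map.injective hinj hEq
    · intro f hf
      obtain ⟨u, v, rfl⟩ := sym2_rep f
      simp only [mem_filter, mem_edgeFinset, SimpleGraph.mem_edgeSet, G1_adj,
        Sym2.mem_iff] at hf
      obtain ⟨⟨huv, -⟩, hall⟩ := hf
      have hu : (u : ℕ) < m := hall u (by simp)
      have hv : (v : ℕ) < m := hall v (by simp)
      refine ⟨s(⟨(u : ℕ), hu⟩, ⟨(v : ℕ), hv⟩), ?_, ?_⟩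
      · rw [mem_edgeFinset, SimpleGraph.mem_edgeSet, top_adj]
        intro hh
        rw [Fin.ext_iff] at hh
        exact huv (Fin.ext hh)
      · simp [Sym2.map_pair_eq, Fin.ext_iff]
  rw [← key, SimpleGraph.card_edgeFinset_top_eq_card_choose_two, Fintype.card_fin]

lemma card_E2 (m n : ℕ) :
    ((((⊤ : SimpleGraph (Fin (m + n))) \ bip (m + n) m n).edgeFinset.filter
      (fun e : Sym2 (Fin (m + n)) => ∀ v : Fin (m + n), v ∈ e → m ≤ (v : ℕ))).card) = n.choose 2 := by
  have key : ((⊤ : SimpleGraph (Fin n)).edgeFinset).card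
      = ((((⊤ : SimpleGraph (Fin (m + n))) \ bip (m + n) m n).edgeFinset.filter
        (fun e : Sym2 (Fin (m + n)) => ∀ v : Fin (m + n), v ∈ e → m ≤ (v : ℕ))).card) := by
    apply Finset.card_bij (fun e _ => Sym2.map (Fin.natAdd m) e)
    · intro e he
      obtain ⟨u, v, rfl⟩ := sym2_rep e
      rw [mem_edgeFinset, SimpleGraph.mem_edgeSet, top_adj] at he
      simp only [Sym2.map_pair_eq, mem_filter, mem_edgeFinset, SimpleGraph.mem_edgeSet,
        G1_adj, Sym2.mem_iff, Fin.coe_natAdd]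
      refine ⟨⟨?_, Or.inr ⟨Nat.le_add_right _ _, Nat.le_add_right _ _⟩⟩, ?_⟩
      · intro hh
        exact he (Fin.ext (by simpa [Fin.ext_iff] using hh))
      · rintro w (rfl | rfl)
        · exact Nat.le_add_right _ _
        · exact Nat.le_add_right _ _
    · intro e he e' he' hEq
      have hinj : Function.Injective (Fin.natAdd m : Fin n → Fin (m + n)) := by
        intro u v h
        rw [Fin.ext_iff] at h ⊢
        simpa using h
      exact Sym2.map.injective hinj hEq
    · intro f hf
      obtain ⟨u, v, rfl⟩ := sym2_rep f
      simp only [mem_filter, mem_edgeFinset, SimpleGraph.mem_edgeSet, G1_adj,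
        Sym2.mem_iff] at hf
      obtain ⟨⟨huv, -⟩, hall⟩ := hf
      have hu : m ≤ (u : ℕ) := hall u (by simp)
      have hv : m ≤ (v : ℕ) := hall v (by simp)
      have hu2 := u.isLt
      have hv2 := v.isLt
      refine ⟨s(⟨(u : ℕ) - m, by omega⟩, ⟨(v : ℕ) - m, by omega⟩), ?_, ?_⟩
      · rw [mem_edgeFinset, SimpleGraph.mem_edgeSet, top_adj]
        intro hh
        rw [Fin.ext_iff] at hh
        simp only at hh
        exact huv (Fin.ext (by omega))
      · simp only [Sym2.map_pair_eq, Sym2.eq_iff, Fin.ext_iff, Fin.coe_natAdd]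
        left
        constructor <;> omega
  rw [← key, SimpleGraph.card_edgeFinset_top_eq_card_choose_two, Fintype.card_fin]

end AuxG1c
section AuxG1d
open scoped Classical

lemma two_mul_epsilon_G1 (m n : ℕ) :
    2 * epsilon ((⊤ : SimpleGraph (Fin (m + n))) \ bip (m + n) m n)
      = (m * ((m - 1) * (m - 2)) + n * ((n - 1) * (n - 2)))
        + 2 * (m.choose 2 * n.choose 2) := by
  rw [two_mul_epsilon]
  have hchar : ((((⊤ : SimpleGraph (Fin (m + n))) \ bip (m + n) m n).edgeFinset.offDiag).filter
        fun p => epPair ((⊤ : SimpleGraph (Fin (m + n))) \ bip (m + n) m n) p.1 p.2)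
      = ((((⊤ : SimpleGraph (Fin (m + n))) \ bip (m + n) m n).edgeFinset.offDiag).filter
          fun p => ∃ v, v ∈ p.1 ∧ v ∈ p.2)
        ∪ ((((⊤ : SimpleGraph (Fin (m + n))) \ bip (m + n) m n).edgeFinset.offDiag).filter
          fun p => ((∀ v : Fin (m + n), v ∈ p.1 → (v : ℕ) < m) ∧
              (∀ v : Fin (m + n), v ∈ p.2 → m ≤ (v : ℕ))) ∨
            ((∀ v : Fin (m + n), v ∈ p.1 → m ≤ (v : ℕ)) ∧
              (∀ v : Fin (m + n), v ∈ p.2 → (v : ℕ) < m))) := by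
    rw [← Finset.filter_or]
    apply Finset.filter_congr
    rintro ⟨e, f⟩ hp
    simp only [mem_offDiag, mem_edgeFinset] at hp
    exact epPair_G1_char hp.1 hp.2.1 hp.2.2
  have hdisj : Disjoint
      ((((⊤ : SimpleGraph (Fin (m + n))) \ bip (m + n) m n).edgeFinset.offDiag).filter
          fun p => ∃ v, v ∈ p.1 ∧ v ∈ p.2)
      ((((⊤ : SimpleGraph (Fin (m + n))) \ bip (m + n) m n).edgeFinset.offDiag).filter
          fun p => ((∀ v : Fin (m + n), v ∈ p.1 → (v : ℕ) < m) ∧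
              (∀ v : Fin (m + n), v ∈ p.2 → m ≤ (v : ℕ))) ∨
            ((∀ v : Fin (m + n), v ∈ p.1 → m ≤ (v : ℕ)) ∧
              (∀ v : Fin (m + n), v ∈ p.2 → (v : ℕ) < m))) := by
    rw [Finset.disjoint_left]
    rintro ⟨e, f⟩ h1 h2
    simp only [mem_filter] at h1 h2
    obtain ⟨-, v, hv1, hv2⟩ := h1
    rcases h2.2 with ⟨ha, hb⟩ | ⟨ha, hb⟩
    · exact absurd (hb v hv2) (not_le.mpr (ha v hv1))
    · exact absurd (ha v hv1) (not_le.mpr (hb v hv2))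
  rw [hchar, Finset.card_union_of_disjoint hdisj, card_shared]
  have hsum : (∑ v, (((⊤ : SimpleGraph (Fin (m + n))) \ bip (m + n) m n).degree v *
        ((⊤ : SimpleGraph (Fin (m + n))) \ bip (m + n) m n).degree v -
        ((⊤ : SimpleGraph (Fin (m + n))) \ bip (m + n) m n).degree v))
      = m * ((m - 1) * (m - 2)) + n * ((n - 1) * (n - 2)) := by
    rw [Finset.sum_congr rfl (fun v _ => by rw [G1_degree v, sq_sub])]
    rw [← Finset.sum_filter_add_sum_filter_not univ (fun v : Fin (m + n) => (v : ℕ) < m)]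
    have hA : (∑ v ∈ univ.filter (fun v : Fin (m + n) => (v : ℕ) < m),
        ((if (v : ℕ) < m then m else n) - 1) * (((if (v : ℕ) < m then m else n) - 1) - 1))
        = m * ((m - 1) * (m - 2)) := by
      rw [Finset.sum_congr rfl (fun v hv => by rw [if_pos (mem_filter.mp hv).2])]
      rw [Finset.sum_const, card_filter_lt, smul_eq_mul]
      rfl
    have hB : (∑ v ∈ univ.filter (fun v : Fin (m + n) => ¬(v : ℕ) < m),
        ((if (v : ℕ) < m then m else n) - 1) * (((if (v : ℕ) < m then m else n) - 1) - 1))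
        = n * ((n - 1) * (n - 2)) := by
      rw [Finset.sum_congr rfl (fun v hv => by rw [if_neg (mem_filter.mp hv).2])]
      rw [Finset.sum_const, smul_eq_mul]
      have : (univ.filter (fun v : Fin (m + n) => ¬(v : ℕ) < m))
          = (univ.filter (fun v : Fin (m + n) => m ≤ (v : ℕ))) := by
        apply Finset.filter_congr
        intro v _
        simp [not_lt]
      rw [this, card_filter_ge]
      rfl
    rw [hA, hB]
  rw [hsum]
  have hM : ((((⊤ : SimpleGraph (Fin (m + n))) \ bip (m + n) m n).edgeFinset.offDiag).filter
          fun p => ((∀ v : Fin (m + n), v ∈ p.1 → (v : ℕ) < m) ∧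
              (∀ v : Fin (m + n), v ∈ p.2 → m ≤ (v : ℕ))) ∨
            ((∀ v : Fin (m + n), v ∈ p.1 → m ≤ (v : ℕ)) ∧
              (∀ v : Fin (m + n), v ∈ p.2 → (v : ℕ) < m)))
      = ((((⊤ : SimpleGraph (Fin (m + n))) \ bip (m + n) m n).edgeFinset.filter
          (fun e : Sym2 (Fin (m + n)) => ∀ v : Fin (m + n), v ∈ e → (v : ℕ) < m)) ×ˢ
         (((⊤ : SimpleGraph (Fin (m + n))) \ bip (m + n) m n).edgeFinset.filter
          (fun e : Sym2 (Fin (m + n)) => ∀ v : Fin (m + n), v ∈ e → m ≤ (v : ℕ))))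
        ∪ ((((⊤ : SimpleGraph (Fin (m + n))) \ bip (m + n) m n).edgeFinset.filter
          (fun e : Sym2 (Fin (m + n)) => ∀ v : Fin (m + n), v ∈ e → m ≤ (v : ℕ))) ×ˢ
         (((⊤ : SimpleGraph (Fin (m + n))) \ bip (m + n) m n).edgeFinset.filter
          (fun e : Sym2 (Fin (m + n)) => ∀ v : Fin (m + n), v ∈ e → (v : ℕ) < m))) := by
    ext ⟨e, f⟩
    simp only [mem_filter, mem_offDiag, mem_union, mem_product]
    constructor
    · rintro ⟨⟨he, hf, hef⟩, (⟨h1, h2⟩ | ⟨h1, h2⟩)⟩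
      · exact Or.inl ⟨⟨he, h1⟩, ⟨hf, h2⟩⟩
      · exact Or.inr ⟨⟨he, h1⟩, ⟨hf, h2⟩⟩
    · have hne : ∀ g g' : Sym2 (Fin (m + n)),
          (∀ v : Fin (m + n), v ∈ g → (v : ℕ) < m) →
          (∀ v : Fin (m + n), v ∈ g' → m ≤ (v : ℕ)) → g ≠ g' := by
        intro g g' hg hg' hEq
        obtain ⟨u, v, rfl⟩ := sym2_rep g
        have h1 : (u : ℕ) < m := hg u (by simp)
        have h2 : m ≤ (u : ℕ) := hg' u (by rw [← hEq]; simp)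
        omega
      rintro (⟨⟨he, h1⟩, ⟨hf, h2⟩⟩ | ⟨⟨he, h1⟩, ⟨hf, h2⟩⟩)
      · exact ⟨⟨he, hf, hne e f h1 h2⟩, Or.inl ⟨h1, h2⟩⟩
      · exact ⟨⟨he, hf, Ne.symm (hne f e h2 h1)⟩, Or.inr ⟨h1, h2⟩⟩
  have hd2 : Disjoint
      ((((⊤ : SimpleGraph (Fin (m + n))) \ bip (m + n) m n).edgeFinset.filter
          (fun e : Sym2 (Fin (m + n)) => ∀ v : Fin (m + n), v ∈ e → (v : ℕ) < m)) ×ˢ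
       (((⊤ : SimpleGraph (Fin (m + n))) \ bip (m + n) m n).edgeFinset.filter
          (fun e : Sym2 (Fin (m + n)) => ∀ v : Fin (m + n), v ∈ e → m ≤ (v : ℕ))))
      ((((⊤ : SimpleGraph (Fin (m + n))) \ bip (m + n) m n).edgeFinset.filter
          (fun e : Sym2 (Fin (m + n)) => ∀ v : Fin (m + n), v ∈ e → m ≤ (v : ℕ))) ×ˢ
       (((⊤ : SimpleGraph (Fin (m + n))) \ bip (m + n) m n).edgeFinset.filter
          (fun e : Sym2 (Fin (m + n)) => ∀ v : Fin (m + n), v ∈ e → (v : ℕ) < m))) := by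
    rw [Finset.disjoint_left]
    rintro ⟨e, f⟩ h1 h2
    simp only [mem_product, mem_filter] at h1 h2
    obtain ⟨⟨-, h1a⟩, -⟩ := h1
    obtain ⟨⟨-, h2a⟩, -⟩ := h2
    obtain ⟨u, v, rfl⟩ := sym2_rep e
    exact absurd (h2a u (by simp)) (not_le.mpr (h1a u (by simp)))
  rw [hM, Finset.card_union_of_disjoint hd2, Finset.card_product, Finset.card_product,
    card_E1, card_E2]
  ring

end AuxG1d

open scoped Classical in
theorem epsilon_complete_minus_bipartite_at_m_add_n (m n : ℕ) (hm : 1 ≤ m) (hn : 1 ≤ n) :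
    (epsilon ((⊤ : SimpleGraph (Fin (m + n))) \ bip (m + n) m n) : ℚ)
      - (epsilon (⊤ : SimpleGraph (Fin (m + n))) : ℚ)
    = (1 / 4) * m * n * ((m : ℚ) * n - 7 * m - 7 * n + 13) := by
  have hsplit : ∀ k : ℕ, 1 ≤ k → k = 1 ∨ ∃ a, k = a + 2 := by
    intro k hk
    rcases Nat.lt_or_ge k 2 with h | h
    · left; omega
    · right; exact ⟨k - 2, by omega⟩
  rcases hsplit m hm with rfl | ⟨a, rfl⟩ <;> rcases hsplit n hn with rfl | ⟨b, rfl⟩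
  · -- m = 1, n = 1
    have H1 := two_mul_epsilon_G1 1 1
    have H2 := two_mul_epsilon_top (1 + 1)
    have q1 := congrArg (fun x : ℕ => (x : ℚ)) H1
    have q2 := congrArg (fun x : ℕ => (x : ℚ)) H2
    norm_num [Nat.cast_choose_two] at q1 q2 ⊢
    simp [q1, q2]
  · -- m = 1, n = b + 2
    have H1 := two_mul_epsilon_G1 1 (b + 2)
    have H2 := two_mul_epsilon_top (1 + (b + 2))
    have e3 : b + 2 - 1 = b + 1 := by omega
    have e4 : b + 2 - 2 = b := by omega
    have e5 : 1 + (b + 2) - 1 = b + 2 := by omega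
    have e6 : 1 + (b + 2) - 2 = b + 1 := by omega
    rw [e3, e4] at H1
    rw [e5, e6] at H2
    have q1 := congrArg (fun x : ℕ => (x : ℚ)) H1
    have q2 := congrArg (fun x : ℕ => (x : ℚ)) H2
    norm_num [Nat.cast_choose_two] at q1 q2 ⊢
    linarith [q1, q2]
  · -- m = a + 2, n = 1
    have H1 := two_mul_epsilon_G1 (a + 2) 1
    have H2 := two_mul_epsilon_top (a + 2 + 1)
    have e3 : a + 2 - 1 = a + 1 := by omega
    have e4 : a + 2 - 2 = a := by omega
    have e5 : a + 2 + 1 - 1 = a + 2 := by omega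
    have e6 : a + 2 + 1 - 2 = a + 1 := by omega
    rw [e3, e4] at H1
    rw [e5, e6] at H2
    have q1 := congrArg (fun x : ℕ => (x : ℚ)) H1
    have q2 := congrArg (fun x : ℕ => (x : ℚ)) H2
    norm_num [Nat.cast_choose_two] at q1 q2 ⊢
    linarith [q1, q2]
  · -- m = a + 2, n = b + 2
    have H1 := two_mul_epsilon_G1 (a + 2) (b + 2)
    have H2 := two_mul_epsilon_top (a + 2 + (b + 2))
    have e1 : a + 2 - 1 = a + 1 := by omega
    have e2 : a + 2 - 2 = a := by omega
    have e3 : b + 2 - 1 = b + 1 := by omega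
    have e4 : b + 2 - 2 = b := by omega
    have e5 : a + 2 + (b + 2) - 1 = a + b + 3 := by omega
    have e6 : a + 2 + (b + 2) - 2 = a + b + 2 := by omega
    rw [e1, e2, e3, e4] at H1
    rw [e5, e6] at H2
    have q1 := congrArg (fun x : ℕ => (x : ℚ)) H1
    have q2 := congrArg (fun x : ℕ => (x : ℚ)) H2
    push_cast [Nat.cast_choose_two] at q1 q2
    push_cast
    linear_combination (q1 - q2) / 2
end

section
/- For 0 < p < 1, the function p ↦ p²(p² − 8p + 8)/64 attains its maximum on (0,1) at p = 3 − √5, where its value is (5√5 − 11)/8. -/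
open Finset SimpleGraph

theorem max_of_random_coefficient :
    (∀ p ∈ Set.Ioo (0 : ℝ) 1,
      p ^ 2 * (p ^ 2 - 8 * p + 8) / 64 ≤ (5 * Real.sqrt 5 - 11) / 8)
    ∧ (3 - Real.sqrt 5) ∈ Set.Ioo (0 : ℝ) 1
    ∧ (3 - Real.sqrt 5) ^ 2 * ((3 - Real.sqrt 5) ^ 2 - 8 * (3 - Real.sqrt 5) + 8) / 64
        = (5 * Real.sqrt 5 - 11) / 8 := by
  have hs : Real.sqrt 5 ^ 2 = 5 := Real.sq_sqrt (by norm_num)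
  have h2 : (2:ℝ) < Real.sqrt 5 := by nlinarith [Real.sqrt_nonneg 5]
  have h3 : Real.sqrt 5 < 3 := by nlinarith [Real.sqrt_nonneg 5]
  refine ⟨fun p hp => ?_, ⟨by linarith, by linarith⟩, by nlinarith⟩
  obtain ⟨h0, h1⟩ := hp
  set s := Real.sqrt 5
  have hfac : 0 < (2 + 2*s)*p - p^2 + 2*s - 2 := by nlinarith
  nlinarith [mul_nonneg (sq_nonneg (p - (3 - s))) hfac.le]
end
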